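/- Let D = (V,A) be a finite directed graph with n = |V| vertices, and let r ∈ V be such that δ⁻(r) = ∅. Let F ⊆ A, and suppose there exists d : V → ℝ such that, with z = χ^F: z(δ⁻(v)) = 1 for all v ∈ V \ {r}; d_v ≥ n·(z_uv − 1) + d_u + 1 for all arcs (u,v) ∈ A; d_r = 0; and z(A) = |V| − 1. Then F is an r-arborescence of D. -/

import Mathlib

/-- `l` is the list of vertices of a directed path from `r` to `v` using arcs of `F`. -/
def IsDirPath {V : Type*} (F : Finset (V × V)) (r v : V) (l : List V) : Prop :=
  l.Nodup ∧ l.head? = some r ∧ l.getLast? = some v ∧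
    l.Chain' (fun a b => (a, b) ∈ F)

/-- Reversed path predicate: `m` is the reversed vertex list of a path from `r` to `v`. -/
def RP {V : Type*} (F : Finset (V × V)) (r v : V) (m : List V) : Prop :=
  m.Nodup ∧ m.head? = some v ∧ m.getLast? = some r ∧
    m.Chain' (fun a b => (b, a) ∈ F)

lemma isDirPath_iff_rp {V : Type*} (F : Finset (V × V)) (r v : V) (l : List V) :
    IsDirPath F r v l ↔ RP F r v l.reverse := by
  unfold IsDirPath RP
  rw [List.nodup_reverse, List.head?_reverse, List.getLast?_reverse, List.Chain', List.Chain', List.isChain_reverse]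
  constructor
  · rintro ⟨h1, h2, h3, h4⟩; exact ⟨h1, h3, h2, h4⟩
  · rintro ⟨h1, h2, h3, h4⟩; exact ⟨h1, h3, h2, h4⟩

theorem stmt_4 {V : Type*} [Fintype V] [DecidableEq V]
    (A : Finset (V × V)) (r : V)
    (hr : ∀ a ∈ A, a.2 ≠ r)
    (F : Finset (V × V)) (hFA : F ⊆ A)
    (z : V × V → ℝ) (hz : z = fun a => if a ∈ F then 1 else 0)
    (d : V → ℝ)
    (hdeg : ∀ v : V, v ≠ r → ∑ a ∈ A.filter (fun a => a.2 = v), z a = 1)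
    (hdist : ∀ a ∈ A, d a.2 ≥ (Fintype.card V : ℝ) * (z a - 1) + d a.1 + 1)
    (hdr : d r = 0)
    (htot : ∑ a ∈ A, z a = (Fintype.card V : ℝ) - 1) :
    ∀ v : V, v ≠ r → ∃! l : List V, IsDirPath F r v l := by
  classical
  -- d strictly increases along arcs of F
  have hFd : ∀ a ∈ F, d a.1 + 1 ≤ d a.2 := by
    intro a ha
    have h := hdist a (hFA ha)
    rw [hz] at h
    simp only [ha, if_pos] at h
    linarith
  -- unique predecessor
  have huniq : ∀ v : V, v ≠ r → ∃! u : V, (u, v) ∈ F := by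
    intro v hv
    have h := hdeg v hv
    rw [hz] at h
    rw [Finset.sum_boole] at h
    have hcard : ((A.filter (fun a => a.2 = v)).filter (fun a => a ∈ F)).card = 1 := by
      exact_mod_cast h
    obtain ⟨a, ha⟩ := Finset.card_eq_one.mp hcard
    have haF : a ∈ F ∧ a.2 = v := by
      have : a ∈ (A.filter (fun a => a.2 = v)).filter (fun a => a ∈ F) := by
        rw [ha]; exact Finset.mem_singleton_self a
      simp only [Finset.mem_filter] at this
      exact ⟨this.2, this.1.2⟩
    refine ⟨a.1, ?_, ?_⟩
    · show (a.1, v) ∈ F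
      have h2 : (a.1, a.2) ∈ F := by rw [Prod.mk.eta]; exact haF.1
      rw [haF.2] at h2; exact h2
    · intro u hu
      have h3 : (u, v) ∈ (A.filter (fun a => a.2 = v)).filter (fun a => a ∈ F) :=
        Finset.mem_filter.mpr ⟨Finset.mem_filter.mpr ⟨hFA hu, rfl⟩, hu⟩
      rw [ha, Finset.mem_singleton] at h3
      exact congrArg Prod.fst h3
  -- existence of reversed paths, with d-bound
  have hex : ∀ k : ℕ, ∀ v : V,
      (Finset.univ.filter (fun w => d w < d v)).card ≤ k → v ≠ r →
      ∃ m : List V, RP F r v m ∧ ∀ w ∈ m, d w ≤ d v := by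
    intro k
    induction k with
    | zero =>
      intro v hk hv
      obtain ⟨u, hu, -⟩ := huniq v hv
      have hdu : d u < d v := by have := hFd (u, v) hu; simp at this; linarith
      have : u ∈ Finset.univ.filter (fun w => d w < d v) := by
        simp [hdu]
      have := Finset.card_pos.mpr ⟨u, this⟩
      omega
    | succ k ih =>
      intro v hk hv
      obtain ⟨u, hu, -⟩ := huniq v hv
      have hdu : d u + 1 ≤ d v := by have := hFd (u, v) hu; simpa using this
      by_cases hur : u = r
      · subst hur
        refine ⟨[v, u], ⟨?_, rfl, rfl, ?_⟩, ?_⟩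
        · simp [hv]
        · exact List.isChain_pair.mpr hu
        · intro w hw
          simp at hw
          rcases hw with h | h <;> subst h
          · exact le_refl _
          · linarith
      · have hsub : Finset.univ.filter (fun w => d w < d u) ⊆
            (Finset.univ.filter (fun w => d w < d v)).erase u := by
          intro w hw
          simp only [Finset.mem_filter, Finset.mem_univ, true_and] at hw
          rw [Finset.mem_erase]
          constructor
          · intro h; subst h; exact lt_irrefl _ hw
          · simp only [Finset.mem_filter, Finset.mem_univ, true_and]
            linarith
        have hult : u ∈ Finset.univ.filter (fun w => d w < d v) := by
          simp only [Finset.mem_filter, Finset.mem_univ, true_and]; linarith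
        have hcard : (Finset.univ.filter (fun w => d w < d u)).card ≤ k := by
          have h1 := Finset.card_le_card hsub
          have h2 := Finset.card_erase_of_mem hult
          omega
        obtain ⟨m, ⟨hnd, hhd, hlast, hch⟩, hbd⟩ := ih u hcard hur
        obtain ⟨a, t, rfl⟩ : ∃ a t, m = a :: t := by
          cases m with
          | nil => simp at hhd
          | cons a t => exact ⟨a, t, rfl⟩
        have ha : u = a := by simpa using hhd.symm
        subst ha
        refine ⟨v :: u :: t, ⟨?_, rfl, ?_, ?_⟩, ?_⟩
        · rw [List.nodup_cons]
          refine ⟨?_, hnd⟩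
          intro hmem
          have := hbd v hmem
          linarith
        · rw [List.getLast?_cons_cons]
          exact hlast
        · rw [List.Chain', List.isChain_cons_cons]
          exact ⟨hu, hch⟩
        · intro w hw
          rcases List.mem_cons.mp hw with h | h
          · subst h; exact le_refl _
          · have := hbd w h; linarith
  -- uniqueness of reversed paths
  have huniqp : ∀ k : ℕ, ∀ m1 m2 : List V, m1.length ≤ k → ∀ v : V,
      RP F r v m1 → RP F r v m2 → m1 = m2 := by
    intro k
    induction k with
    | zero =>
      intro m1 m2 hlen v h1 h2
      obtain ⟨-, hh1, -, -⟩ := h1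
      cases m1 with
      | nil => simp at hh1
      | cons a t => simp at hlen
    | succ k ih =>
      intro m1 m2 hlen v h1 h2
      obtain ⟨hnd1, hh1, hl1, hc1⟩ := h1
      obtain ⟨hnd2, hh2, hl2, hc2⟩ := h2
      obtain ⟨a1, t1, rfl⟩ : ∃ a t, m1 = a :: t := by
        cases m1 with
        | nil => simp at hh1
        | cons a t => exact ⟨a, t, rfl⟩
      obtain ⟨a2, t2, rfl⟩ : ∃ a t, m2 = a :: t := by
        cases m2 with
        | nil => simp at hh2
        | cons a t => exact ⟨a, t, rfl⟩
      have ha1 : v = a1 := by simpa using hh1.symm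
      have ha2 : v = a2 := by simpa using hh2.symm
      subst ha1; subst ha2
      by_cases hvr : v = r
      · subst hvr
        have ht1 : t1 = [] := by
          cases t1 with
          | nil => rfl
          | cons b s =>
            rw [List.getLast?_cons_cons] at hl1
            have : v ∈ b :: s := by
              have := List.mem_of_getLast? (l := b :: s) (a := v) hl1
              exact this
            exact absurd this (List.nodup_cons.mp hnd1).1
        have ht2 : t2 = [] := by
          cases t2 with
          | nil => rfl
          | cons b s =>
            rw [List.getLast?_cons_cons] at hl2
            have : v ∈ b :: s := by
              have := List.mem_of_getLast? (l := b :: s) (a := v) hl2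
              exact this
            exact absurd this (List.nodup_cons.mp hnd2).1
        rw [ht1, ht2]
      · obtain ⟨u, -, huu⟩ := huniq v hvr
        obtain ⟨b1, s1, rfl⟩ : ∃ b s, t1 = b :: s := by
          cases t1 with
          | nil => simp at hl1; exact absurd hl1 hvr
          | cons b s => exact ⟨b, s, rfl⟩
        obtain ⟨b2, s2, rfl⟩ : ∃ b s, t2 = b :: s := by
          cases t2 with
          | nil => simp at hl2; exact absurd hl2 hvr
          | cons b s => exact ⟨b, s, rfl⟩
        rw [List.Chain', List.isChain_cons_cons] at hc1 hc2
        have hb1 : u = b1 := (huu b1 hc1.1).symm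
        have hb2 : u = b2 := (huu b2 hc2.1).symm
        subst hb1; subst hb2
        have heq : (u :: s1) = (u :: s2) := by
          apply ih (u :: s1) (u :: s2) (by simp at hlen ⊢; omega) u
          · exact ⟨(List.nodup_cons.mp hnd1).2, rfl,
              by rw [List.getLast?_cons_cons] at hl1; exact hl1, hc1.2⟩
          · exact ⟨(List.nodup_cons.mp hnd2).2, rfl,
              by rw [List.getLast?_cons_cons] at hl2; exact hl2, hc2.2⟩
        rw [heq]
  -- conclusion
  intro v hv
  obtain ⟨m, hm, -⟩ := hex (Finset.univ.filter (fun w => d w < d v)).card v le_rfl hv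
  refine ⟨m.reverse, ?_, ?_⟩
  · show IsDirPath F r v m.reverse
    rw [isDirPath_iff_rp, List.reverse_reverse]
    exact hm
  · intro l hl
    rw [isDirPath_iff_rp] at hl
    have := huniqp l.reverse.length l.reverse m le_rfl v hl hm
    rw [← this, List.reverse_reverse]
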